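/- (Orthogonality of Sheffer ψ-sequences) Let Q be a generalized difference-tial operator with ψ-basic sequence {q_n}, and let {s_n} be a Sheffer Q-ψ-sequence (Q s_n = n_ψ s_{n−1}, deg s_n = n, s_0 = c ≠ 0), with s_n = S^{-1} q_n for an invertible operator S commuting with Q. Define the bilinear form (f, g)_{Q,S} := [(Wf)(Q) S g](0), where W is the linear map sending s_n to x^n and (Wf)(Q) substitutes Q into the polynomial Wf. Then (s_k, s_n)_{Q,S} = n_ψ! · δ_{k,n}. -/

import Mathlib

open Polynomial

/-- orthogonality of Sheffer ψ-sequences: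
(s_k, s_n)_{Q,S} = n_ψ! · δ_{k,n} for the bilinear form
(f,g)_{Q,S} = [(Wf)(Q) S g](0). -/
theorem sheffer_orthogonality
    (F : Type*) [Field F] [CharZero F]
    (ψ : ℕ → F) (hψ0 : ψ 0 = 1) (hψ : ∀ n, ψ n ≠ 0)
    (nψ : ℕ → F) (hnψ0 : nψ 0 = 0) (hnψ : ∀ n, nψ (n + 1) = ψ n / ψ (n + 1))
    (ψfact : ℕ → F) (hf0 : ψfact 0 = 1)
    (hf : ∀ n, ψfact (n + 1) = ψfact n * nψ (n + 1))
    (Q : Module.End F (Polynomial F))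
    (hQc : ∀ c : F, Q (C c) = 0)
    (hQdeg : ∀ p : Polynomial F, 1 ≤ p.natDegree →
      Q p ≠ 0 ∧ (Q p).natDegree = p.natDegree - 1)
    (qs : ℕ → Polynomial F)
    (hqdeg : ∀ n, (qs n).degree = (n : ℕ))
    (hq0 : qs 0 = 1)
    (hqeval : ∀ n : ℕ, (qs (n + 1)).eval 0 = 0)
    (hQq : ∀ n : ℕ, Q (qs (n + 1)) = nψ (n + 1) • qs n)
    (S : Module.End F (Polynomial F)) (hS : IsUnit S)
    (hSQ : S * Q = Q * S)
    (s : ℕ → Polynomial F) (hs : ∀ n, S (s n) = qs n)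
    (hs0 : (s 0) ≠ 0)
    (W : Polynomial F →ₗ[F] Polynomial F)
    (hW : ∀ n : ℕ, W (s n) = X ^ n) :
    ∀ k n : ℕ,
      ((aeval Q (W (s k))) (S (s n))).eval 0 = if k = n then ψfact n else 0 := by
  -- ψfact never vanishes
  have hfact_ne : ∀ n, ψfact n ≠ 0 := by
    intro n
    induction n with
    | zero => rw [hf0]; exact one_ne_zero
    | succ m ih =>
      rw [hf m, hnψ m]
      exact mul_ne_zero ih (div_ne_zero (hψ m) (hψ (m + 1)))
  -- Key lemma: Q^k (qs (n+k)) = (ψfact (n+k) / ψfact n) • qs n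
  have key : ∀ k n : ℕ, (Q ^ k) (qs (n + k)) = (ψfact (n + k) / ψfact n) • qs n := by
    intro k
    induction k with
    | zero =>
      intro n
      simp [div_self (hfact_ne n)]
    | succ m ih =>
      intro n
      have h1 : (Q ^ (m + 1)) (qs (n + (m + 1))) = (Q ^ m) (Q (qs (n + m + 1))) := by
        rw [pow_succ, Module.End.mul_apply]; rfl
      rw [h1, hQq (n + m), map_smul, ih n, smul_smul]
      congr 1
      simp only [Nat.add_succ, hf (n + m)]
      have := hfact_ne n
      field_simp
  have keyn : ∀ n : ℕ, (Q ^ n) (qs n) = ψfact n • (1 : Polynomial F) := by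
    intro n
    have := key n 0
    simpa [hq0, hf0] using this
  -- Q^k (qs n) = 0 for n < k
  have hzero : ∀ k n : ℕ, n < k → (Q ^ k) (qs n) = 0 := by
    intro k n hlt
    obtain ⟨m, rfl⟩ := Nat.exists_eq_add_of_lt hlt
    have : Q ^ (n + m + 1) = Q ^ m * Q * Q ^ n := by
      rw [show n + m + 1 = m + 1 + n by omega, pow_add, pow_succ]
    rw [this, Module.End.mul_apply, Module.End.mul_apply, keyn n, map_smul]
    have hQ1 : Q (1 : Polynomial F) = 0 := by
      have := hQc 1
      simpa using this
    rw [hQ1, smul_zero, map_zero]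
  intro k n
  rw [hW k, hs n, map_pow, aeval_X]
  rcases lt_trichotomy k n with h | h | h
  · -- k < n : Q^k qs n = c • qs (n - k), n - k ≥ 1
    obtain ⟨m, rfl⟩ := Nat.exists_eq_add_of_lt h
    rw [if_neg (by omega)]
    have := key k (m + 1)
    rw [show k + m + 1 = m + 1 + k by omega, this, eval_smul, hqeval m, smul_zero]
  · subst h
    rw [if_pos rfl, keyn k, eval_smul, eval_one, smul_eq_mul, mul_one]
  · rw [if_neg (by omega), hzero k n h, eval_zero]
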